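/- Let N > 1 be a natural number, let a < b be real numbers, and let x : Fin N → ℝ satisfy a ≤ x j ≤ b for all j, with mean μ = (1/N)·∑_{j} x j. Model a sample of size m drawn without replacement by choosing a permutation σ of Fin N uniformly at random and forming the sample mean X̄_m = (1/m)·∑_{t=0}^{m-1} x (σ t). Fix ε ∈ (0,1) and δ ∈ (0,1), and set u = (log(1/δ)/2)·(b − a)²/ε². Then for every natural number m with 1 ≤ m ≤ N and m ≥ min{(u + 1)/(1 + u/N), (u + u/N)/(1 + u/N)}, the probability of the event X̄_m − μ ≥ −ε is at least 1 − δ. -/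

import Mathlib

open Real Finset Equiv


lemma hoeff_scalar (p h : ℝ) (hp0 : 0 ≤ p) (hp1 : p ≤ 1) :
    (1 - p) + p * Real.exp h ≤ Real.exp (p * h + h ^ 2 / 8) := by
  rcases eq_or_lt_of_le hp0 with hp0' | hp0'
  · subst p; simpa using Real.one_le_exp (by positivity : (0:ℝ) ≤ h^2/8)
  rcases eq_or_lt_of_le hp1 with hp1' | hp1'
  · subst p
    simpa using Real.exp_le_exp.2 (by nlinarith [sq_nonneg h] : h ≤ 1 * h + h^2/8)
  -- 0 < p < 1
  set q : ℝ → ℝ := fun h => 1 - p + p * Real.exp h with hq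
  have hqpos : ∀ h, 0 < q h := fun h => by
    have := Real.exp_pos h; simp only [hq]; nlinarith
  set f : ℝ → ℝ := fun h => p * h + h ^ 2 / 8 - Real.log (q h) with hf
  set g : ℝ → ℝ := fun h => p + h / 4 - p * Real.exp h / q h with hg
  have hderivf : ∀ h, HasDerivAt f (g h) h := by
    intro h
    have h1 : HasDerivAt q (p * Real.exp h) h := by
      exact ((Real.hasDerivAt_exp h).const_mul p).const_add (1 - p)
    have h2 : HasDerivAt (fun h => Real.log (q h)) (p * Real.exp h / q h) h :=
      h1.log (hqpos h).ne'
    have h3 : HasDerivAt (fun h : ℝ => p * h + h ^ 2 / 8) (p + h / 4) h := by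
      have := ((hasDerivAt_pow 2 h).div_const 8).const_add 0
      have h4 : HasDerivAt (fun h : ℝ => p * h) p h := by
        simpa using (hasDerivAt_id h).const_mul p
      have h5 := h4.add ((hasDerivAt_pow 2 h).div_const 8)
      exact h5.congr_deriv (by norm_num; ring)
    exact h3.sub h2
  have hderivg : ∀ h, HasDerivAt g
      (1/4 - (p * Real.exp h * q h - p * Real.exp h * (p * Real.exp h)) / (q h) ^ 2) h := by
    intro h
    have h1 : HasDerivAt q (p * Real.exp h) h := by
      exact ((Real.hasDerivAt_exp h).const_mul p).const_add (1 - p)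
    have h2 : HasDerivAt (fun h => p * Real.exp h) (p * Real.exp h) h :=
      (Real.hasDerivAt_exp h).const_mul p
    have h3 := h2.div h1 (hqpos h).ne'
    have h4 : HasDerivAt (fun h : ℝ => p + h / 4) (1/4) h := by
      simpa using ((hasDerivAt_id h).div_const 4).const_add p
    simpa [hg, Pi.sub_def, Pi.div_def] using h4.sub h3
  have hgnonneg : ∀ h, 0 ≤ 1/4 - (p * Real.exp h * q h - p * Real.exp h * (p * Real.exp h)) / (q h) ^ 2 := by
    intro h
    rw [sub_nonneg, div_le_iff₀ (pow_pos (hqpos h) 2)]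
    have hqh : q h = 1 - p + p * Real.exp h := rfl
    have he := Real.exp_pos h
    nlinarith [sq_nonneg (1 - p - p * Real.exp h), sq_nonneg (q h)]
  have hgmono : Monotone g := monotone_of_hasDerivAt_nonneg hderivg hgnonneg
  have hg0 : g 0 = 0 := by simp [hg, hq]
  have hf0 : f 0 = 0 := by simp [hf, hq]
  have hfnonneg : ∀ h, 0 ≤ f h := by
    intro h
    rcases le_or_gt 0 h with hh | hh
    · have hmono : MonotoneOn f (Set.Ici 0) := by
        apply monotoneOn_of_hasDerivWithinAt_nonneg (convex_Ici 0)
          (fun x _ => (hderivf x).continuousAt.continuousWithinAt)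
          (fun x hx => (hderivf x).hasDerivWithinAt)
        intro x hx
        rw [interior_Ici] at hx
        have := hgmono (le_of_lt hx)
        rw [hg0] at this; exact this
      have := hmono (Set.self_mem_Ici) (Set.mem_Ici.2 hh) hh
      rwa [hf0] at this
    · have hanti : AntitoneOn f (Set.Iic 0) := by
        apply antitoneOn_of_hasDerivWithinAt_nonpos (convex_Iic 0)
          (fun x _ => (hderivf x).continuousAt.continuousWithinAt)
          (fun x hx => (hderivf x).hasDerivWithinAt)
        intro x hx
        rw [interior_Iic] at hx
        have := hgmono (le_of_lt hx)
        rw [hg0] at this; exact this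
      have := hanti (Set.mem_Iic.2 hh.le) (Set.self_mem_Iic) hh.le
      rwa [hf0] at this
  have := hfnonneg h
  have hlog : Real.log (q h) ≤ p * h + h ^ 2 / 8 := by simp only [hf] at this; linarith
  calc (1 - p) + p * Real.exp h = q h := rfl
    _ ≤ Real.exp (p * h + h ^ 2 / 8) := by
        rw [← Real.exp_log (hqpos h)]; exact Real.exp_le_exp.2 hlog

lemma hoeff_sum' {ι : Type*} (s : Finset ι) (hs : s.Nonempty) (y : ι → ℝ) (a b : ℝ)
    (hab : a < b) (hy : ∀ i ∈ s, a ≤ y i ∧ y i ≤ b) (c : ℝ) :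
    ∑ i ∈ s, Real.exp (c * y i) ≤
      (s.card : ℝ) * Real.exp (c * ((∑ i ∈ s, y i) / s.card) + c ^ 2 * (b - a) ^ 2 / 8) := by
  have hn : (0:ℝ) < s.card := by exact_mod_cast card_pos.2 hs
  have hba : (0:ℝ) < b - a := by linarith
  have hpt : ∀ i ∈ s, Real.exp (c * y i) ≤
      ((b - y i) * Real.exp (c * a) + (y i - a) * Real.exp (c * b)) / (b - a) := by
    intro i hi
    obtain ⟨h1, h2⟩ := hy i hi
    have ht0 : 0 ≤ (b - y i) / (b - a) := div_nonneg (by linarith) hba.le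
    have hr0 : 0 ≤ (y i - a) / (b - a) := div_nonneg (by linarith) hba.le
    have hsum : (b - y i) / (b - a) + (y i - a) / (b - a) = 1 := by field_simp; ring
    have hcv := convexOn_exp.2 (Set.mem_univ (c * a)) (Set.mem_univ (c * b)) ht0 hr0 hsum
    simp only [smul_eq_mul] at hcv
    have harg : (b - y i) / (b - a) * (c * a) + (y i - a) / (b - a) * (c * b) = c * y i := by
      field_simp; ring
    rw [harg] at hcv
    calc Real.exp (c * y i) ≤
        (b - y i) / (b - a) * Real.exp (c * a) + (y i - a) / (b - a) * Real.exp (c * b) := hcv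
      _ = ((b - y i) * Real.exp (c * a) + (y i - a) * Real.exp (c * b)) / (b - a) := by ring
  have hsumpt := Finset.sum_le_sum hpt
  set S := ∑ i ∈ s, y i with hS
  set n := (s.card : ℝ) with hncast
  have hSsum : ∑ i ∈ s, ((b - y i) * Real.exp (c * a) + (y i - a) * Real.exp (c * b)) / (b - a)
      = ((n * b - S) * Real.exp (c * a) + (S - n * a) * Real.exp (c * b)) / (b - a) := by
    rw [← Finset.sum_div]
    congr 1
    rw [Finset.sum_add_distrib, ← Finset.sum_mul, ← Finset.sum_mul,
      Finset.sum_sub_distrib, Finset.sum_sub_distrib]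
    simp only [Finset.sum_const, nsmul_eq_mul, ← hS, ← hncast]
    try ring
  have hSa : n * a ≤ S := by
    have := Finset.card_nsmul_le_sum s y a (fun i hi => (hy i hi).1)
    simpa [nsmul_eq_mul, ← hncast] using this
  have hSb : S ≤ n * b := by
    have := Finset.sum_le_card_nsmul s y b (fun i hi => (hy i hi).2)
    simpa [nsmul_eq_mul, ← hncast] using this
  set yb := S / n with hyb
  set p := (yb - a) / (b - a) with hp
  have hyba : a ≤ yb := by rw [hyb]; rw [le_div_iff₀ hn]; linarith
  have hybb : yb ≤ b := by rw [hyb]; rw [div_le_iff₀ hn]; linarith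
  have hp0 : 0 ≤ p := div_nonneg (by linarith) hba.le
  have hp1 : p ≤ 1 := by rw [hp, div_le_one hba]; linarith
  have hsc := hoeff_scalar p (c * (b - a)) hp0 hp1
  have key : ((n * b - S) * Real.exp (c * a) + (S - n * a) * Real.exp (c * b)) / (b - a)
      ≤ n * Real.exp (c * yb + c ^ 2 * (b - a) ^ 2 / 8) := by
    have hmul := mul_le_mul_of_nonneg_left hsc
      (by positivity : (0:ℝ) ≤ n * Real.exp (c * a))
    have hL : n * Real.exp (c * a) * ((1 - p) + p * Real.exp (c * (b - a)))
        = ((n * b - S) * Real.exp (c * a) + (S - n * a) * Real.exp (c * b)) / (b - a) := by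
      have e1 : Real.exp (c * b) = Real.exp (c * a) * Real.exp (c * (b - a)) := by
        rw [← Real.exp_add]; ring_nf
      rw [e1]
      have hnS : n * yb = S := by rw [hyb]; field_simp
      have h1p : 1 - p = (b - yb) / (b - a) := by rw [hp]; field_simp; ring
      rw [h1p, hp, ← hnS]
      field_simp
    have hR : n * Real.exp (c * a) * Real.exp (p * (c * (b - a)) + (c * (b - a)) ^ 2 / 8)
        = n * Real.exp (c * yb + c ^ 2 * (b - a) ^ 2 / 8) := by
      rw [mul_assoc, ← Real.exp_add]
      congr 2
      have : p * (c * (b - a)) = c * (yb - a) := by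
        rw [hp]; field_simp
      rw [this]; ring
    rw [hL, hR] at hmul
    exact hmul
  calc ∑ i ∈ s, Real.exp (c * y i)
      ≤ ((n * b - S) * Real.exp (c * a) + (S - n * a) * Real.exp (c * b)) / (b - a) := by
        rw [← hSsum]; exact hsumpt
    _ ≤ n * Real.exp (c * yb + c ^ 2 * (b - a) ^ 2 / 8) := key


variable {N : ℕ} (x : Fin N → ℝ)

-- abbreviation via def for readability
noncomputable def T (x : Fin N → ℝ) (σ : Equiv.Perm (Fin N)) (k : ℕ) : ℝ :=
  ∑ t ∈ univ.filter (fun t : Fin N => (t : ℕ) < k), x (σ t)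

lemma filter_lt_succ (k : ℕ) (hk : k < N) :
    univ.filter (fun t : Fin N => (t : ℕ) < k + 1)
      = insert ⟨k, hk⟩ (univ.filter (fun t : Fin N => (t : ℕ) < k)) := by
  ext t
  simp [Nat.lt_succ_iff_lt_or_eq, Fin.ext_iff, or_comm]
  omega

lemma T_succ (σ : Equiv.Perm (Fin N)) (k : ℕ) (hk : k < N) :
    T x σ (k + 1) = T x σ k + x (σ ⟨k, hk⟩) := by
  rw [T, filter_lt_succ k hk, Finset.sum_insert (by simp)]
  rw [T]; ring

lemma card_filter_lt (k : ℕ) (hk : k ≤ N) :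
    (univ.filter (fun t : Fin N => (t : ℕ) < k)).card = k := by
  induction k with
  | zero => simp
  | succ n ih =>
    rw [filter_lt_succ n (by omega), Finset.card_insert_of_notMem (by simp)]
    rw [ih (by omega)]

lemma card_filter_ge (k : ℕ) (hk : k ≤ N) :
    (univ.filter (fun t : Fin N => k ≤ (t : ℕ))).card = N - k := by
  have h1 := Finset.card_filter_add_card_filter_not
    (s := (univ : Finset (Fin N))) (p := fun t : Fin N => (t : ℕ) < k)
  have h2 : (univ.filter (fun t : Fin N => ¬ (t : ℕ) < k))
      = univ.filter (fun t : Fin N => k ≤ (t : ℕ)) := by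
    apply Finset.filter_congr; intro t _; simp [not_lt]
  rw [card_filter_lt k hk, h2] at h1
  simp only [Finset.card_univ, Fintype.card_fin] at h1
  omega

lemma T_compl (σ : Equiv.Perm (Fin N)) (k : ℕ) :
    ∑ t ∈ univ.filter (fun t : Fin N => k ≤ (t : ℕ)), x (σ t) = (∑ j, x j) - T x σ k := by
  have h1 := Finset.sum_filter_add_sum_filter_not (univ : Finset (Fin N))
    (fun t : Fin N => (t : ℕ) < k) (fun t => x (σ t))
  have h2 : (univ.filter (fun t : Fin N => ¬ (t : ℕ) < k))
      = univ.filter (fun t : Fin N => k ≤ (t : ℕ)) := by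
    apply Finset.filter_congr; intro t _; simp [not_lt]
  rw [h2] at h1
  have h3 : ∑ t : Fin N, x (σ t) = ∑ j, x j := Equiv.sum_comp σ x
  rw [h3] at h1
  rw [T]
  linarith

lemma symm_swap (c : ℝ) (k j : ℕ) (hk : k < N) (hj : j < N) (hkj : k ≤ j) :
    ∑ σ : Equiv.Perm (Fin N), Real.exp (c * T x σ k) * Real.exp (c * x (σ ⟨j, hj⟩))
      = ∑ σ : Equiv.Perm (Fin N), Real.exp (c * T x σ k) * Real.exp (c * x (σ ⟨k, hk⟩)) := by
  have := Equiv.sum_comp (Equiv.mulRight (Equiv.swap (⟨k, hk⟩ : Fin N) ⟨j, hj⟩))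
    (fun σ : Equiv.Perm (Fin N) => Real.exp (c * T x σ k) * Real.exp (c * x (σ ⟨j, hj⟩)))
  rw [← this]
  apply Finset.sum_congr rfl
  intro σ _
  simp only [Equiv.coe_mulRight]
  have hT : T x (σ * Equiv.swap (⟨k, hk⟩ : Fin N) ⟨j, hj⟩) k = T x σ k := by
    rw [T, T]
    apply Finset.sum_congr rfl
    intro t ht
    simp only [Finset.mem_filter] at ht
    have htk : t ≠ (⟨k, hk⟩ : Fin N) := by
      intro h; rw [h] at ht; exact absurd ht.2 (lt_irrefl k)
    have htj : t ≠ (⟨j, hj⟩ : Fin N) := by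
      intro h; rw [h] at ht; simp at ht; omega
    rw [Equiv.Perm.mul_apply, Equiv.swap_apply_of_ne_of_ne htk htj]
  have happ : (σ * Equiv.swap (⟨k, hk⟩ : Fin N) ⟨j, hj⟩) ⟨j, hj⟩ = σ ⟨k, hk⟩ := by
    rw [Equiv.Perm.mul_apply, Equiv.swap_apply_right]
  rw [hT, happ]

lemma step_sum (c : ℝ) (k : ℕ) (hk : k + 1 ≤ N) :
    ((N - k : ℕ) : ℝ) * ∑ σ : Equiv.Perm (Fin N), Real.exp (c * T x σ (k + 1))
      = ∑ σ : Equiv.Perm (Fin N), Real.exp (c * T x σ k) *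
          ∑ j ∈ univ.filter (fun j : Fin N => k ≤ (j : ℕ)), Real.exp (c * x (σ j)) := by
  have hkN : k < N := hk
  have step1 : ∀ σ : Equiv.Perm (Fin N), Real.exp (c * T x σ k) *
        (∑ j ∈ univ.filter (fun j : Fin N => k ≤ (j : ℕ)), Real.exp (c * x (σ j)))
      = ∑ j ∈ univ.filter (fun j : Fin N => k ≤ (j : ℕ)),
          Real.exp (c * T x σ k) * Real.exp (c * x (σ j)) := fun σ => Finset.mul_sum _ _ _
  rw [Finset.sum_congr rfl (fun σ _ => step1 σ), Finset.sum_comm]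
  have step2 : ∀ j ∈ univ.filter (fun j : Fin N => k ≤ (j : ℕ)),
      (∑ σ : Equiv.Perm (Fin N), Real.exp (c * T x σ k) * Real.exp (c * x (σ j)))
        = ∑ σ : Equiv.Perm (Fin N), Real.exp (c * T x σ (k + 1)) := by
    intro j hj
    simp only [Finset.mem_filter] at hj
    have h1 : (⟨(j : ℕ), j.isLt⟩ : Fin N) = j := by ext; rfl
    have h2 := symm_swap x c k (j : ℕ) hkN j.isLt hj.2
    rw [h1] at h2
    rw [h2]
    apply Finset.sum_congr rfl
    intro σ _
    rw [T_succ x σ k hkN, mul_add, Real.exp_add]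
  rw [Finset.sum_congr rfl step2, Finset.sum_const, card_filter_ge k hkN.le, nsmul_eq_mul]


lemma mgf_bound (a b : ℝ) (hab : a < b) (hx : ∀ j, a ≤ x j ∧ x j ≤ b)
    (k : ℕ) (hk : k < N) (θ : ℝ) :
    ∑ σ : Equiv.Perm (Fin N), Real.exp (θ / ((N : ℝ) - k) * (T x σ k - k * ((∑ j, x j) / N)))
      ≤ (N.factorial : ℝ) * Real.exp (θ ^ 2 * (b - a) ^ 2 / 8 *
          ∑ j ∈ Finset.Ico (N - k) N, (1 : ℝ) / (j : ℝ) ^ 2) := by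
  revert hk
  induction k with
  | zero =>
    intro hk
    have hT0 : ∀ σ : Equiv.Perm (Fin N), T x σ 0 = 0 := by
      intro σ
      rw [T]
      apply Finset.sum_eq_zero
      intro t ht
      simp at ht
    simp only [Nat.cast_zero, zero_mul, sub_zero, Nat.sub_zero, Finset.Ico_self,
      Finset.sum_empty, mul_zero, Real.exp_zero, mul_one]
    rw [Finset.sum_congr rfl (fun σ _ => by rw [hT0 σ, mul_zero, Real.exp_zero])]
    rw [Finset.sum_const, Finset.card_univ, nsmul_eq_mul, mul_one, Fintype.card_perm,
      Fintype.card_fin]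
  | succ k ih =>
    intro hk
    have hkN : k < N := by omega
    have ihk := ih hkN
    set μ : ℝ := (∑ j, x j) / N with hμ
    have hN0 : (0:ℝ) < N := by
      have : 0 < N := by omega
      exact_mod_cast this
    have hk1R : ((k:ℝ) + 1) < N := by exact_mod_cast hk
    have hNk : (0:ℝ) < (N:ℝ) - k := by linarith
    have hNk1 : (0:ℝ) < (N:ℝ) - ((k:ℝ) + 1) := by linarith
    set c : ℝ := θ / ((N:ℝ) - ((k:ℝ) + 1)) with hc
    have hμN : ∑ j, x j = (N:ℝ) * μ := by rw [hμ]; field_simp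
    have hcast : ((N - k : ℕ):ℝ) = (N:ℝ) - k := by
      rw [Nat.cast_sub hkN.le]
    -- inner Hoeffding bound
    have hinner : ∀ σ : Equiv.Perm (Fin N),
        ∑ j ∈ univ.filter (fun j : Fin N => k ≤ (j : ℕ)), Real.exp (c * x (σ j))
          ≤ ((N:ℝ) - k) * Real.exp (c * (((N:ℝ) * μ - T x σ k) / ((N:ℝ) - k))
              + c ^ 2 * (b - a) ^ 2 / 8) := by
      intro σ
      have hne : (univ.filter (fun j : Fin N => k ≤ (j : ℕ))).Nonempty := by
        rw [← Finset.card_pos, card_filter_ge k hkN.le]; omega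
      have hb := hoeff_sum' (univ.filter (fun j : Fin N => k ≤ (j : ℕ))) hne
        (fun j => x (σ j)) a b hab (fun i _ => hx (σ i)) c
      rw [card_filter_ge k hkN.le, T_compl x σ k, hcast, hμN] at hb
      exact hb
    -- goal termwise rewrite
    have hgoalterm : ∀ σ : Equiv.Perm (Fin N),
        Real.exp (θ / ((N : ℝ) - ((k:ℕ)+1 : ℕ)) * (T x σ (k+1) - ((k:ℕ)+1 : ℕ) * μ))
          = Real.exp (c * T x σ (k+1)) * Real.exp (-(c * ((k:ℝ)+1) * μ)) := by
      intro σ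
      rw [← Real.exp_add]
      congr 1
      push_cast
      rw [hc]
      ring
    have hstep := step_sum x c k hk.le
    rw [hcast] at hstep
    -- pointwise exponent identity after Hoeffding
    have hpoint : ∀ σ : Equiv.Perm (Fin N),
        Real.exp (c * T x σ k) * (((N:ℝ) - k) * Real.exp (c * (((N:ℝ) * μ - T x σ k)
            / ((N:ℝ) - k)) + c ^ 2 * (b - a) ^ 2 / 8)) * Real.exp (-(c * ((k:ℝ)+1) * μ))
          = ((N:ℝ) - k) * (Real.exp (θ / ((N:ℝ) - k) * (T x σ k - k * μ))
              * Real.exp (c ^ 2 * (b - a) ^ 2 / 8)) := by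
      intro σ
      have hne1 : (N:ℝ) - (k:ℝ) ≠ 0 := ne_of_gt hNk
      have hne2 : (N:ℝ) - ((k:ℝ)+1) ≠ 0 := ne_of_gt hNk1
      have hexp : c * T x σ k + (c * (((N:ℝ) * μ - T x σ k) / ((N:ℝ) - k))
            + c ^ 2 * (b - a) ^ 2 / 8) + (-(c * ((k:ℝ)+1) * μ))
          = θ / ((N:ℝ) - k) * (T x σ k - k * μ) + c ^ 2 * (b - a) ^ 2 / 8 := by
        rw [hc]
        field_simp
        ring
      calc Real.exp (c * T x σ k) * (((N:ℝ) - k) * Real.exp (c * (((N:ℝ) * μ - T x σ k)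
            / ((N:ℝ) - k)) + c ^ 2 * (b - a) ^ 2 / 8)) * Real.exp (-(c * ((k:ℝ)+1) * μ))
          = ((N:ℝ) - k) * Real.exp (c * T x σ k + (c * (((N:ℝ) * μ - T x σ k) / ((N:ℝ) - k))
              + c ^ 2 * (b - a) ^ 2 / 8) + (-(c * ((k:ℝ)+1) * μ))) := by
            rw [Real.exp_add (c * T x σ k + (c * (((N:ℝ) * μ - T x σ k) / ((N:ℝ) - k))
                + c ^ 2 * (b - a) ^ 2 / 8)) (-(c * ((k:ℝ)+1) * μ)),
              Real.exp_add (c * T x σ k) (c * (((N:ℝ) * μ - T x σ k) / ((N:ℝ) - k))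
                + c ^ 2 * (b - a) ^ 2 / 8)]
            ring
        _ = ((N:ℝ) - k) * (Real.exp (θ / ((N:ℝ) - k) * (T x σ k - k * μ))
              * Real.exp (c ^ 2 * (b - a) ^ 2 / 8)) := by
            rw [hexp, Real.exp_add (θ / ((N:ℝ) - k) * (T x σ k - k * μ))
              (c ^ 2 * (b - a) ^ 2 / 8)]
    -- chain
    have hmul : ((N:ℝ) - k) * (∑ σ : Equiv.Perm (Fin N),
        Real.exp (θ / ((N : ℝ) - ((k:ℕ)+1 : ℕ)) * (T x σ (k+1) - ((k:ℕ)+1 : ℕ) * μ)))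
        ≤ ((N:ℝ) - k) * ((N.factorial : ℝ) * Real.exp (θ ^ 2 * (b - a) ^ 2 / 8 *
            (∑ j ∈ Finset.Ico (N - k) N, (1 : ℝ) / (j : ℝ) ^ 2) + c ^ 2 * (b - a) ^ 2 / 8)) := by
      calc ((N:ℝ) - k) * (∑ σ : Equiv.Perm (Fin N),
          Real.exp (θ / ((N : ℝ) - ((k:ℕ)+1 : ℕ)) * (T x σ (k+1) - ((k:ℕ)+1 : ℕ) * μ)))
          = (((N:ℝ) - k) * ∑ σ : Equiv.Perm (Fin N), Real.exp (c * T x σ (k+1)))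
              * Real.exp (-(c * ((k:ℝ)+1) * μ)) := by
            rw [Finset.sum_congr rfl (fun σ _ => hgoalterm σ), ← Finset.sum_mul]
            ring
        _ = (∑ σ : Equiv.Perm (Fin N), Real.exp (c * T x σ k) *
              ∑ j ∈ univ.filter (fun j : Fin N => k ≤ (j : ℕ)), Real.exp (c * x (σ j)))
              * Real.exp (-(c * ((k:ℝ)+1) * μ)) := by rw [hstep]
        _ ≤ (∑ σ : Equiv.Perm (Fin N), Real.exp (c * T x σ k) *
              (((N:ℝ) - k) * Real.exp (c * (((N:ℝ) * μ - T x σ k) / ((N:ℝ) - k))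
                + c ^ 2 * (b - a) ^ 2 / 8)))
              * Real.exp (-(c * ((k:ℝ)+1) * μ)) := by
            apply mul_le_mul_of_nonneg_right _ (Real.exp_nonneg _)
            apply Finset.sum_le_sum
            intro σ _
            exact mul_le_mul_of_nonneg_left (hinner σ) (Real.exp_nonneg _)
        _ = ((N:ℝ) - k) * ((∑ σ : Equiv.Perm (Fin N),
              Real.exp (θ / ((N:ℝ) - k) * (T x σ k - k * μ)))
              * Real.exp (c ^ 2 * (b - a) ^ 2 / 8)) := by
            rw [Finset.sum_mul, Finset.sum_congr rfl (fun σ _ => hpoint σ),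
              ← Finset.mul_sum, ← Finset.sum_mul]
            try ring
        _ ≤ ((N:ℝ) - k) * (((N.factorial : ℝ) * Real.exp (θ ^ 2 * (b - a) ^ 2 / 8 *
              ∑ j ∈ Finset.Ico (N - k) N, (1 : ℝ) / (j : ℝ) ^ 2))
              * Real.exp (c ^ 2 * (b - a) ^ 2 / 8)) := by
            apply mul_le_mul_of_nonneg_left _ hNk.le
            exact mul_le_mul_of_nonneg_right ihk (Real.exp_nonneg _)
        _ = ((N:ℝ) - k) * ((N.factorial : ℝ) * Real.exp (θ ^ 2 * (b - a) ^ 2 / 8 *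
              (∑ j ∈ Finset.Ico (N - k) N, (1 : ℝ) / (j : ℝ) ^ 2)
              + c ^ 2 * (b - a) ^ 2 / 8)) := by
            rw [mul_assoc, ← Real.exp_add]
    have hfinal := le_of_mul_le_mul_left hmul hNk
    -- now rewrite RHS exponent to the Ico (N - (k+1)) N sum
    have hW : θ ^ 2 * (b - a) ^ 2 / 8 *
          (∑ j ∈ Finset.Ico (N - (k+1)) N, (1 : ℝ) / (j : ℝ) ^ 2)
        = θ ^ 2 * (b - a) ^ 2 / 8 *
          (∑ j ∈ Finset.Ico (N - k) N, (1 : ℝ) / (j : ℝ) ^ 2) + c ^ 2 * (b - a) ^ 2 / 8 := by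
      have hset : Finset.Ico (N - (k+1)) N = insert (N - (k+1)) (Finset.Ico (N - k) N) := by
        ext t
        simp only [Finset.mem_Ico, Finset.mem_insert]
        omega
      have hnm : (N - (k+1)) ∉ Finset.Ico (N - k) N := by
        simp only [Finset.mem_Ico]
        omega
      rw [hset, Finset.sum_insert hnm]
      have hc2 : ((N - (k+1) : ℕ):ℝ) = (N:ℝ) - ((k:ℝ) + 1) := by
        rw [Nat.cast_sub hk.le]; push_cast; ring
      rw [hc2, hc]
      have hne' : (N:ℝ) - ((k:ℝ)+1) ≠ 0 := ne_of_gt hNk1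
      field_simp
      ring
    rw [hW]
    exact hfinal

lemma sumA : ∀ (d K Nn : ℕ), 1 ≤ K → K + d = Nn →
    ∑ j ∈ Finset.Ico K Nn, (1:ℝ)/(j:ℝ)^2 ≤ (d:ℝ)*((K:ℝ)+1)/((K:ℝ)^2*(Nn:ℝ)) := by
  intro d
  induction d with
  | zero =>
    intro K Nn hK hKN
    have : K = Nn := by omega
    subst this
    simp
  | succ d ih =>
    intro K Nn hK hKN
    have hKp : (0:ℝ) < K := by exact_mod_cast hK
    have hNp : (0:ℝ) < Nn := by
      have h0 : 0 < Nn := by omega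
      exact_mod_cast h0
    have hNe : (Nn:ℝ) = (K:ℝ) + (d:ℝ) + 1 := by exact_mod_cast congrArg (Nat.cast (R := ℝ)) hKN.symm
    have hset : Finset.Ico K Nn = insert K (Finset.Ico (K+1) Nn) := by
      ext t
      simp only [Finset.mem_Ico, Finset.mem_insert]
      omega
    have hnm : K ∉ Finset.Ico (K+1) Nn := by simp
    rw [hset, Finset.sum_insert hnm]
    have ihh := ih (K+1) Nn (by omega) (by omega)
    push_cast at ihh
    have key : ((K:ℝ)+1)^2*(Nn:ℝ) + (K:ℝ)^2*((d:ℝ)*((K:ℝ)+2)) ≤ ((d:ℝ)+1)*((K:ℝ)+1)^3 := by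
      rw [hNe]
      nlinarith [mul_nonneg hKp.le ((Nat.cast_nonneg d : (0:ℝ) ≤ (d:ℝ)))]
    have step : (1:ℝ)/(K:ℝ)^2 + (d:ℝ)*((K:ℝ)+1+1)/(((K:ℝ)+1)^2*(Nn:ℝ))
        ≤ ((d:ℝ)+1)*((K:ℝ)+1)/((K:ℝ)^2*(Nn:ℝ)) := by
      rw [div_add_div _ _ (by positivity) (by positivity),
        div_le_div_iff₀ (by positivity) (by positivity)]
      nlinarith [mul_le_mul_of_nonneg_right key (le_of_lt (by positivity : (0:ℝ) < (K:ℝ)^2*(Nn:ℝ)))]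
    calc (1:ℝ)/(K:ℝ)^2 + ∑ j ∈ Finset.Ico (K+1) Nn, (1:ℝ)/(j:ℝ)^2
        ≤ (1:ℝ)/(K:ℝ)^2 + (d:ℝ)*((K:ℝ)+1+1)/(((K:ℝ)+1)^2*(Nn:ℝ)) := by linarith [ihh]
      _ ≤ ((d:ℝ)+1)*((K:ℝ)+1)/((K:ℝ)^2*(Nn:ℝ)) := step
      _ = (((d:ℕ)+1 : ℕ):ℝ)*((K:ℝ)+1)/((K:ℝ)^2*(Nn:ℝ)) := by push_cast; ring

lemma tailUp (a b : ℝ) (hab : a < b) (hx : ∀ j, a ≤ x j ∧ x j ≤ b)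
    (k : ℕ) (hk1 : 1 ≤ k) (hkN : k < N) (s : ℝ) (hs : 0 < s) :
    ((univ.filter (fun σ : Equiv.Perm (Fin N) =>
        (k:ℝ) * ((∑ j, x j)/N) + s ≤ T x σ k)).card : ℝ)
      ≤ (N.factorial : ℝ) * Real.exp (-2*s^2*(N:ℝ)/((b-a)^2*(k:ℝ)*((N:ℝ)-(k:ℝ)+1))) := by
  set μ : ℝ := (∑ j, x j)/N with hμ
  have hN0 : (0:ℝ) < N := by
    have h0 : 0 < N := by omega
    exact_mod_cast h0
  have hkR : (0:ℝ) < k := by exact_mod_cast hk1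
  have hkNR : (k:ℝ) < N := by exact_mod_cast hkN
  have he : (0:ℝ) < b - a := by linarith
  have hNk1p : (0:ℝ) < (N:ℝ) - k + 1 := by linarith
  set lam : ℝ := 4*(N:ℝ)*s/((b-a)^2*(k:ℝ)*((N:ℝ)-(k:ℝ)+1)) with hlam
  have hlamp : 0 < lam := by rw [hlam]; positivity
  set θ : ℝ := lam * ((N:ℝ) - k) with hθ
  have hθlam : θ / ((N:ℝ) - k) = lam := by
    rw [hθ, mul_div_assoc, div_self (by linarith : (N:ℝ) - k ≠ 0), mul_one]
  -- Chernoff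
  have hchern : ((univ.filter (fun σ : Equiv.Perm (Fin N) =>
      (k:ℝ) * μ + s ≤ T x σ k)).card : ℝ) * Real.exp (lam * s)
      ≤ ∑ σ : Equiv.Perm (Fin N), Real.exp (lam * (T x σ k - k * μ)) := by
    calc ((univ.filter (fun σ : Equiv.Perm (Fin N) => (k:ℝ) * μ + s ≤ T x σ k)).card : ℝ)
          * Real.exp (lam * s)
        = ∑ _σ ∈ univ.filter (fun σ : Equiv.Perm (Fin N) => (k:ℝ) * μ + s ≤ T x σ k),
            Real.exp (lam * s) := by rw [Finset.sum_const, nsmul_eq_mul]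
      _ ≤ ∑ σ ∈ univ.filter (fun σ : Equiv.Perm (Fin N) => (k:ℝ) * μ + s ≤ T x σ k),
            Real.exp (lam * (T x σ k - k * μ)) := by
          apply Finset.sum_le_sum
          intro σ hσ
          simp only [Finset.mem_filter] at hσ
          apply Real.exp_le_exp.2
          have := hσ.2
          nlinarith
      _ ≤ ∑ σ : Equiv.Perm (Fin N), Real.exp (lam * (T x σ k - k * μ)) := by
          apply Finset.sum_le_sum_of_subset_of_nonneg (Finset.filter_subset _ _)
          intro σ _ _
          exact Real.exp_nonneg _
  have hmgf := mgf_bound x a b hab hx k hkN θ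
  rw [hθlam] at hmgf
  -- sum bound
  have hsum := sumA k (N - k) N (by omega) (by omega)
  have hcast : ((N - k : ℕ):ℝ) = (N:ℝ) - k := by rw [Nat.cast_sub hkN.le]
  rw [hcast] at hsum
  have hWb : θ^2*(b-a)^2/8 * (∑ j ∈ Finset.Ico (N-k) N, (1:ℝ)/(j:ℝ)^2)
      ≤ lam^2 * (b-a)^2/8 * ((k:ℝ)*((N:ℝ)-k+1)/(N:ℝ)) := by
    have h1 : θ^2 = lam^2 * ((N:ℝ)-k)^2 := by rw [hθ]; ring
    have h2 : ((N:ℝ)-k)^2 * (∑ j ∈ Finset.Ico (N-k) N, (1:ℝ)/(j:ℝ)^2)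
        ≤ (k:ℝ)*((N:ℝ)-k+1)/(N:ℝ) := by
      have h3 := mul_le_mul_of_nonneg_left hsum (by positivity : (0:ℝ) ≤ ((N:ℝ)-k)^2)
      calc ((N:ℝ)-k)^2 * (∑ j ∈ Finset.Ico (N-k) N, (1:ℝ)/(j:ℝ)^2)
          ≤ ((N:ℝ)-k)^2 * ((k:ℝ)*(((N:ℝ)-k)+1)/(((N:ℝ)-k)^2*(N:ℝ))) := h3
        _ = (k:ℝ)*((N:ℝ)-k+1)/(N:ℝ) := by
            have : ((N:ℝ)-k) ≠ 0 := by linarith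
            field_simp
      -- done
    calc θ^2*(b-a)^2/8 * (∑ j ∈ Finset.Ico (N-k) N, (1:ℝ)/(j:ℝ)^2)
        = lam^2*(b-a)^2/8 * (((N:ℝ)-k)^2 * (∑ j ∈ Finset.Ico (N-k) N, (1:ℝ)/(j:ℝ)^2)) := by
          rw [h1]; ring
      _ ≤ lam^2 * (b-a)^2/8 * ((k:ℝ)*((N:ℝ)-k+1)/(N:ℝ)) := by
          apply mul_le_mul_of_nonneg_left h2 (by positivity)
  -- combine
  have hcomb : ((univ.filter (fun σ : Equiv.Perm (Fin N) =>
      (k:ℝ) * μ + s ≤ T x σ k)).card : ℝ)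
      ≤ (N.factorial : ℝ) * Real.exp (lam^2 * (b-a)^2/8 * ((k:ℝ)*((N:ℝ)-k+1)/(N:ℝ)) - lam * s) := by
    have h4 : ((univ.filter (fun σ : Equiv.Perm (Fin N) =>
        (k:ℝ) * μ + s ≤ T x σ k)).card : ℝ) * Real.exp (lam * s)
        ≤ (N.factorial : ℝ) * Real.exp (lam^2 * (b-a)^2/8 * ((k:ℝ)*((N:ℝ)-k+1)/(N:ℝ))) := by
      calc ((univ.filter (fun σ : Equiv.Perm (Fin N) =>
          (k:ℝ) * μ + s ≤ T x σ k)).card : ℝ) * Real.exp (lam * s)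
          ≤ ∑ σ : Equiv.Perm (Fin N), Real.exp (lam * (T x σ k - k * μ)) := hchern
        _ ≤ (N.factorial : ℝ) * Real.exp (θ^2*(b-a)^2/8 *
              ∑ j ∈ Finset.Ico (N-k) N, (1:ℝ)/(j:ℝ)^2) := hmgf
        _ ≤ (N.factorial : ℝ) * Real.exp (lam^2 * (b-a)^2/8 * ((k:ℝ)*((N:ℝ)-k+1)/(N:ℝ))) := by
            apply mul_le_mul_of_nonneg_left (Real.exp_le_exp.2 hWb) (by positivity)
    have h5 := mul_le_mul_of_nonneg_right h4 (le_of_lt (Real.exp_pos (-(lam*s))))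
    rw [mul_assoc, ← Real.exp_add, mul_assoc, ← Real.exp_add] at h5
    have h6 : lam * s + -(lam * s) = 0 := by ring
    rw [h6, Real.exp_zero, mul_one] at h5
    have h7 : lam^2 * (b-a)^2/8 * ((k:ℝ)*((N:ℝ)-k+1)/(N:ℝ)) + -(lam*s)
        = lam^2 * (b-a)^2/8 * ((k:ℝ)*((N:ℝ)-k+1)/(N:ℝ)) - lam*s := by ring
    rw [h7] at h5
    exact h5
  -- exponent evaluation
  have hexp : lam^2 * (b-a)^2/8 * ((k:ℝ)*((N:ℝ)-k+1)/(N:ℝ)) - lam * s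
      = -2*s^2*(N:ℝ)/((b-a)^2*(k:ℝ)*((N:ℝ)-(k:ℝ)+1)) := by
    rw [hlam]
    field_simp
    ring
  rw [hexp] at hcomb
  exact hcomb

lemma T_neg (σ : Equiv.Perm (Fin N)) (k : ℕ) : T (fun j => -x j) σ k = -T x σ k := by
  rw [T, T, ← Finset.sum_neg_distrib]

lemma tailLow (a b : ℝ) (hab : a < b) (hx : ∀ j, a ≤ x j ∧ x j ≤ b)
    (k : ℕ) (hk1 : 1 ≤ k) (hkN : k < N) (s : ℝ) (hs : 0 < s) :
    ((univ.filter (fun σ : Equiv.Perm (Fin N) =>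
        T x σ k ≤ (k:ℝ) * ((∑ j, x j)/N) - s)).card : ℝ)
      ≤ (N.factorial : ℝ) * Real.exp (-2*s^2*(N:ℝ)/((b-a)^2*(k:ℝ)*((N:ℝ)-(k:ℝ)+1))) := by
  have h := tailUp (fun j => -x j) (-b) (-a) (by linarith)
    (fun j => ⟨by simpa using neg_le_neg (hx j).2, by simpa using neg_le_neg (hx j).1⟩) k hk1 hkN s hs
  have hrw : (-a - -b : ℝ) = b - a := by ring
  rw [hrw] at h
  have hfilter : (univ.filter (fun σ : Equiv.Perm (Fin N) =>
      (k:ℝ) * ((∑ j, (fun j => -x j) j)/N) + s ≤ T (fun j => -x j) σ k))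
      = (univ.filter (fun σ : Equiv.Perm (Fin N) =>
        T x σ k ≤ (k:ℝ) * ((∑ j, x j)/N) - s)) := by
    apply Finset.filter_congr
    intro σ _
    rw [T_neg]
    simp only [Finset.sum_neg_distrib]
    constructor
    · intro hh
      rw [neg_div, mul_neg] at hh
      linarith [hh]
    · intro hh
      rw [neg_div, mul_neg]
      linarith [hh]
  rw [hfilter] at h
  exact h

lemma rev_card (m : ℕ) (hm : m ≤ N) (c : ℝ) :
    (univ.filter (fun σ : Equiv.Perm (Fin N) =>
        c ≤ ∑ t ∈ univ.filter (fun t : Fin N => m ≤ (t:ℕ)), x (σ t))).card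
      = (univ.filter (fun σ : Equiv.Perm (Fin N) => c ≤ T x σ (N - m))).card := by
  have hsum : ∀ σ : Equiv.Perm (Fin N),
      T x (σ * Fin.revPerm) (N - m) = ∑ t ∈ univ.filter (fun t : Fin N => m ≤ (t:ℕ)), x (σ t) := by
    intro σ
    rw [T]
    apply Finset.sum_nbij' (i := fun t => Fin.rev t) (j := fun t => Fin.rev t)
    · intro t ht
      simp only [Finset.mem_filter, Finset.mem_univ, true_and] at ht ⊢
      rw [Fin.val_rev]
      omega
    · intro t ht
      simp only [Finset.mem_filter, Finset.mem_univ, true_and] at ht ⊢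
      rw [Fin.val_rev]
      have := t.isLt
      omega
    · intro t _; exact Fin.rev_rev t
    · intro t _; exact Fin.rev_rev t
    · intro t _
      simp only [Equiv.Perm.mul_apply]
      congr 1
  apply Finset.card_nbij' (i := fun σ => σ * Fin.revPerm) (j := fun σ => σ * Fin.revPerm)
  · intro σ hσ
    simp only [Finset.mem_coe, Finset.mem_filter, Finset.mem_univ, true_and] at hσ ⊢
    rw [hsum σ]
    exact hσ
  · intro σ hσ
    simp only [Finset.mem_coe, Finset.mem_filter, Finset.mem_univ, true_and] at hσ ⊢
    have h2 := hsum (σ * Fin.revPerm)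
    have h3 : σ * Fin.revPerm * Fin.revPerm = σ := by
      ext t
      simp [Equiv.Perm.mul_apply, Fin.rev_rev]
    rw [h3] at h2
    rw [← h2]
    exact hσ
  · intro σ _
    ext t
    simp [Equiv.Perm.mul_apply, Fin.rev_rev]
  · intro σ _
    ext t
    simp [Equiv.Perm.mul_apply, Fin.rev_rev]

set_option maxHeartbeats 1000000 in
/-- Lower-tail sample-size version: under the same sample-size condition,
`X̄_m − μ ≥ −ε` with probability at least `1 − δ`. -/
theorem stmt3 (N : ℕ) (hN : 1 < N) (a b : ℝ) (hab : a < b)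
    (x : Fin N → ℝ) (hx : ∀ j, a ≤ x j ∧ x j ≤ b)
    (ε δ : ℝ) (hε0 : 0 < ε) (hε1 : ε < 1) (hδ0 : 0 < δ) (hδ1 : δ < 1)
    (u : ℝ) (hu : u = Real.log (1 / δ) / 2 * ((b - a) ^ 2 / ε ^ 2))
    (m : ℕ) (hm1 : 1 ≤ m) (hmN : m ≤ N)
    (hm : min ((u + 1) / (1 + u / (N : ℝ))) ((u + u / (N : ℝ)) / (1 + u / (N : ℝ))) ≤ (m : ℝ)) :
    1 - δ ≤
      (Nat.card {σ : Equiv.Perm (Fin N) //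
          -ε ≤ (1 / (m : ℝ)) * (∑ t ∈ Finset.univ.filter (fun t : Fin N => (t : ℕ) < m), x (σ t))
              - (1 / (N : ℝ)) * ∑ j, x j} : ℝ)
        / (Nat.card (Equiv.Perm (Fin N)) : ℝ) := by
  classical
  set P : Equiv.Perm (Fin N) → Prop := fun σ =>
    -ε ≤ (1 / (m : ℝ)) * (∑ t ∈ Finset.univ.filter (fun t : Fin N => (t : ℕ) < m), x (σ t))
      - (1 / (N : ℝ)) * ∑ j, x j with hP
  have hN0 : (0:ℝ) < N := by
    have h0 : 0 < N := by omega
    exact_mod_cast h0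
  have hm0 : (0:ℝ) < m := by exact_mod_cast hm1
  have hmNR : (m:ℝ) ≤ N := by exact_mod_cast hmN
  have he : (0:ℝ) < b - a := by linarith
  have hfact : (0:ℝ) < (N.factorial : ℝ) := by exact_mod_cast N.factorial_pos
  -- card identities
  have hcardPerm : (Nat.card (Equiv.Perm (Fin N)) : ℝ) = (N.factorial : ℝ) := by
    rw [Nat.card_eq_fintype_card, Fintype.card_perm, Fintype.card_fin]
  have hcardSub : (Nat.card {σ : Equiv.Perm (Fin N) // P σ} : ℝ)
      = ((univ.filter P).card : ℝ) := by
    rw [Nat.card_eq_fintype_card]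
    norm_cast
    exact Fintype.card_subtype P
  rw [hcardPerm]
  -- reduce to bounding the bad event
  suffices hbad : ((univ.filter (fun σ : Equiv.Perm (Fin N) => ¬ P σ)).card : ℝ)
      ≤ δ * (N.factorial : ℝ) by
    have hsplit : (univ.filter P).card
        + (univ.filter (fun σ : Equiv.Perm (Fin N) => ¬ P σ)).card = N.factorial := by
      rw [Finset.card_filter_add_card_filter_not, Finset.card_univ,
        Fintype.card_perm, Fintype.card_fin]
    have hsplitR : ((univ.filter P).card : ℝ)
        + ((univ.filter (fun σ : Equiv.Perm (Fin N) => ¬ P σ)).card : ℝ)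
          = (N.factorial : ℝ) := by exact_mod_cast hsplit
    rw [le_div_iff₀ hfact]
    calc (1 - δ) * (N.factorial : ℝ)
        ≤ (N.factorial : ℝ)
          - ((univ.filter (fun σ : Equiv.Perm (Fin N) => ¬ P σ)).card : ℝ) := by nlinarith
      _ = ((univ.filter P).card : ℝ) := by linarith
      _ = (Nat.card {σ : Equiv.Perm (Fin N) // P σ} : ℝ) := hcardSub.symm
  -- the bad event is contained in a lower-tail event
  set μ : ℝ := (∑ j, x j) / N with hμ
  have hsub : (univ.filter (fun σ : Equiv.Perm (Fin N) => ¬ P σ))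
      ⊆ univ.filter (fun σ : Equiv.Perm (Fin N) => T x σ m ≤ (m:ℝ) * μ - (m:ℝ)*ε) := by
    intro σ hσ
    simp only [Finset.mem_filter, Finset.mem_univ, true_and, hP, not_le] at hσ ⊢
    have h2 := mul_lt_mul_of_pos_left hσ hm0
    have h3 : (m:ℝ) * ((1 / (m:ℝ)) * (∑ t ∈ Finset.univ.filter
        (fun t : Fin N => (t : ℕ) < m), x (σ t)) - (1 / (N : ℝ)) * ∑ j, x j)
        = T x σ m - (m:ℝ) * μ := by
      rw [T, hμ]
      field_simp
    rw [h3] at h2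
    nlinarith
  -- main case analysis
  by_cases hmeq : m = N
  · -- m = N : the bad event is empty
    have hempty : (univ.filter (fun σ : Equiv.Perm (Fin N) => ¬ P σ)) = ∅ := by
      apply Finset.filter_false_of_mem
      intro σ _
      simp only [hP, not_not, not_le, not_lt]
      have hfull : Finset.univ.filter (fun t : Fin N => (t : ℕ) < m) = Finset.univ := by
        apply Finset.filter_true_of_mem
        intro t _
        have := t.isLt
        omega
      rw [hfull]
      have hsum : ∑ t : Fin N, x (σ t) = ∑ j, x j := Equiv.sum_comp σ x
      rw [hsum, hmeq]
      have : (1 / (N:ℝ)) * (∑ j, x j) - (1 / (N:ℝ)) * (∑ j, x j) = 0 := by ring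
      rw [this]
      linarith
    rw [hempty]
    simp only [Finset.card_empty, Nat.cast_zero]
    positivity
  -- m < N
  have hmltN : m < N := lt_of_le_of_ne hmN hmeq
  have hmltNR : (m:ℝ) < N := by exact_mod_cast hmltN
  -- numeric facts about u
  have hL : Real.log (1/δ) = 2*u*ε^2/(b-a)^2 := by
    rw [hu]
    field_simp
  have hLpos : 0 < Real.log (1/δ) := by
    apply Real.log_pos
    rw [lt_div_iff₀ hδ0]
    linarith
  have hu0 : 0 < u := by
    rw [hu]
    have h2 : (0:ℝ) < (b-a)^2 / ε^2 := by positivity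
    positivity
  have hlogδ : Real.log δ = -(2*u*ε^2/(b-a)^2) := by
    rw [one_div, Real.log_inv] at hL
    linarith
  have hden : (0:ℝ) < 1 + u / N := by positivity
  have hkey : u * ((N:ℝ) - m + 1) ≤ (m:ℝ) * N ∨ u * ((N:ℝ) - m) ≤ (N:ℝ) * ((m:ℝ) - 1) := by
    rcases min_le_iff.mp hm with hA | hB
    · right
      rw [div_le_iff₀ hden] at hA
      have e1 : (u + 1) * (N:ℝ) ≤ (m:ℝ) * (1 + u / N) * N :=
        mul_le_mul_of_nonneg_right hA hN0.le
      have e2 : (m:ℝ) * (1 + u / N) * N = (m:ℝ)*N + (m:ℝ)*u := by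
        field_simp
      rw [e2] at e1
      have e4 : (u + 1) * (N:ℝ) = u*N + N := by ring
      linarith
    · left
      rw [div_le_iff₀ hden] at hB
      have e1 : (u + u / N) * (N:ℝ) ≤ (m:ℝ) * (1 + u / N) * N :=
        mul_le_mul_of_nonneg_right hB hN0.le
      have e2 : (m:ℝ) * (1 + u / N) * N = (m:ℝ)*N + (m:ℝ)*u := by
        field_simp
      have e3 : (u + u / N) * (N:ℝ) = u*N + u := by
        field_simp
      rw [e2, e3] at e1
      linarith
  rcases hkey with hkey | hkey
  · -- Serfling direct bound, k = m
    have htail := tailLow x a b hab hx m hm1 hmltN ((m:ℝ)*ε) (by positivity)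
    have hexp : Real.exp (-2*((m:ℝ)*ε)^2*(N:ℝ)/((b-a)^2*(m:ℝ)*((N:ℝ)-(m:ℝ)+1))) ≤ δ := by
      rw [← Real.exp_log hδ0]
      apply Real.exp_le_exp.2
      rw [hlogδ]
      have hd1 : (0:ℝ) < (b-a)^2*(m:ℝ)*((N:ℝ)-(m:ℝ)+1) := by
        have : (0:ℝ) < (N:ℝ)-(m:ℝ)+1 := by linarith
        positivity
      have h9 : 2*u*ε^2/(b-a)^2
          ≤ 2*((m:ℝ)*ε)^2*(N:ℝ)/((b-a)^2*(m:ℝ)*((N:ℝ)-(m:ℝ)+1)) := by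
        rw [div_le_div_iff₀ (by positivity) hd1]
        nlinarith [mul_le_mul_of_nonneg_left hkey
          (by positivity : (0:ℝ) ≤ 2*ε^2*(b-a)^2*(m:ℝ))]
      have h10 : -2*((m:ℝ)*ε)^2*(N:ℝ)/((b-a)^2*(m:ℝ)*((N:ℝ)-(m:ℝ)+1))
          = -(2*((m:ℝ)*ε)^2*(N:ℝ)/((b-a)^2*(m:ℝ)*((N:ℝ)-(m:ℝ)+1))) := by ring
      rw [h10]
      linarith
    calc ((univ.filter (fun σ : Equiv.Perm (Fin N) => ¬ P σ)).card : ℝ)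
        ≤ ((univ.filter (fun σ : Equiv.Perm (Fin N) =>
            T x σ m ≤ (m:ℝ) * μ - (m:ℝ)*ε)).card : ℝ) := by
          exact_mod_cast Finset.card_le_card hsub
      _ ≤ (N.factorial : ℝ)
            * Real.exp (-2*((m:ℝ)*ε)^2*(N:ℝ)/((b-a)^2*(m:ℝ)*((N:ℝ)-(m:ℝ)+1))) := htail
      _ ≤ (N.factorial : ℝ) * δ := by
          exact mul_le_mul_of_nonneg_left hexp hfact.le
      _ = δ * (N.factorial : ℝ) := by ring
  · -- complement-sample bound, k = N - m
    have hk1 : 1 ≤ N - m := by omega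
    have hkN : N - m < N := by omega
    have hkcast : ((N - m : ℕ):ℝ) = (N:ℝ) - m := by
      rw [Nat.cast_sub hmN]
    have hsub2 : (univ.filter (fun σ : Equiv.Perm (Fin N) => ¬ P σ))
        ⊆ univ.filter (fun σ : Equiv.Perm (Fin N) =>
            ((N - m : ℕ):ℝ) * μ + (m:ℝ)*ε ≤
              ∑ t ∈ univ.filter (fun t : Fin N => m ≤ (t:ℕ)), x (σ t)) := by
      apply hsub.trans
      intro σ hσ
      simp only [Finset.mem_filter, Finset.mem_univ, true_and] at hσ ⊢
      rw [T_compl x σ m, hkcast]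
      have hSμ : (∑ j, x j) = (N:ℝ) * μ := by rw [hμ]; field_simp
      rw [hSμ]
      nlinarith [hσ]
    have hrev := rev_card x m hmN (((N - m : ℕ):ℝ) * μ + (m:ℝ)*ε)
    have htail := tailUp x a b hab hx (N - m) hk1 hkN ((m:ℝ)*ε) (by positivity)
    rw [← hμ] at htail
    have hexp : Real.exp (-2*((m:ℝ)*ε)^2*(N:ℝ)
        /((b-a)^2*((N - m : ℕ):ℝ)*((N:ℝ)-((N - m : ℕ):ℝ)+1))) ≤ δ := by
      rw [hkcast]
      have h11 : (N:ℝ) - ((N:ℝ) - (m:ℝ)) + 1 = (m:ℝ) + 1 := by ring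
      rw [h11]
      rw [← Real.exp_log hδ0]
      apply Real.exp_le_exp.2
      rw [hlogδ]
      have hd1 : (0:ℝ) < (b-a)^2*((N:ℝ)-(m:ℝ))*((m:ℝ)+1) := by
        have h5 : (0:ℝ) < (N:ℝ)-(m:ℝ) := by linarith
        positivity
      have h9 : 2*u*ε^2/(b-a)^2
          ≤ 2*((m:ℝ)*ε)^2*(N:ℝ)/((b-a)^2*((N:ℝ)-(m:ℝ))*((m:ℝ)+1)) := by
        rw [div_le_div_iff₀ (by positivity) hd1]
        nlinarith [mul_le_mul_of_nonneg_left hkey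
          (by positivity : (0:ℝ) ≤ 2*ε^2*(b-a)^2*((m:ℝ)+1)),
          mul_pos (mul_pos (by positivity : (0:ℝ) < 2*ε^2) (by positivity : (0:ℝ) < (b-a)^2)) hN0]
      have h10 : -2*((m:ℝ)*ε)^2*(N:ℝ)/((b-a)^2*((N:ℝ)-(m:ℝ))*((m:ℝ)+1))
          = -(2*((m:ℝ)*ε)^2*(N:ℝ)/((b-a)^2*((N:ℝ)-(m:ℝ))*((m:ℝ)+1))) := by ring
      rw [h10]
      linarith
    calc ((univ.filter (fun σ : Equiv.Perm (Fin N) => ¬ P σ)).card : ℝ)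
        ≤ ((univ.filter (fun σ : Equiv.Perm (Fin N) =>
            ((N - m : ℕ):ℝ) * μ + (m:ℝ)*ε ≤ ∑ t ∈ univ.filter (fun t : Fin N => m ≤ (t:ℕ)),
              x (σ t))).card : ℝ) := by
          exact_mod_cast Finset.card_le_card hsub2
      _ = ((univ.filter (fun σ : Equiv.Perm (Fin N) =>
            ((N - m : ℕ):ℝ) * μ + (m:ℝ)*ε ≤ T x σ (N - m))).card : ℝ) := by
          exact_mod_cast hrev
      _ ≤ (N.factorial : ℝ) * Real.exp (-2*((m:ℝ)*ε)^2*(N:ℝ)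
            /((b-a)^2*((N - m : ℕ):ℝ)*((N:ℝ)-((N - m : ℕ):ℝ)+1))) := htail
      _ ≤ (N.factorial : ℝ) * δ := mul_le_mul_of_nonneg_left hexp hfact.le
      _ = δ * (N.factorial : ℝ) := by ring
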